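/- Let Γ be a Hausdorff topological group and let C be a compact proper subset of Γ. Then C does not contain any thick subset of Γ; in particular no thick subset of Γ is contained in a compact proper subset. -/

import Mathlib

open Pointwise

/-- A subset `N` of a group `G` is thick if for every finite subset `F ⊆ G`,
`N ∩ ⋂_{γ ∈ F} γN ≠ ∅`. -/
def IsThick {G : Type*} [Group G] (N : Set G) : Prop :=
  ∀ F : Finset G, (N ∩ ⋂ γ ∈ F, γ • N).Nonempty

/-- `N(A, B) = {γ ∈ G : γA ∩ B ≠ ∅}`. -/
def NSet (G : Type*) {X : Type*} [Group G] [MulAction G X] (A B : Set X) : Set G :=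
  {γ : G | ((γ • A) ∩ B).Nonempty}

/-- The system `(X, G)` is `k`-transitive: for all nonempty open sets
`U₁, …, U_k, V₁, …, V_k ⊆ X` there is `γ ∈ G` with `γUᵢ ∩ Vᵢ ≠ ∅` for all `i`. -/
def IsKTrans (G : Type*) (X : Type*) [Group G] [TopologicalSpace X] [MulAction G X]
    (k : ℕ) : Prop :=
  ∀ U V : Fin k → Set X, (∀ i, IsOpen (U i)) → (∀ i, (U i).Nonempty) →
    (∀ i, IsOpen (V i)) → (∀ i, (V i).Nonempty) →
    ∃ γ : G, ∀ i, ((γ • U i) ∩ V i).Nonempty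

/-- The system `(X, G)` is thick strong mixing: there is a thick `N ⊆ G` such that for every
pair of nonempty open `U, V ⊆ X` there is a compact `F ⊆ N` with `γU ∩ V ≠ ∅` for all
`γ ∈ N \ F`. -/
def ThickStrongMixing (G : Type*) (X : Type*) [Group G] [TopologicalSpace G]
    [TopologicalSpace X] [MulAction G X] : Prop :=
  ∃ N : Set G, IsThick N ∧
    ∀ U V : Set X, IsOpen U → U.Nonempty → IsOpen V → V.Nonempty →
      ∃ F : Set G, IsCompact F ∧ F ⊆ N ∧ ∀ γ ∈ N \ F, ((γ • U) ∩ V).Nonempty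

/-- The system `(X, G)` is weak mixing: for all nonempty open `U₁, U₂, V₁, V₂ ⊆ X`
there is `γ ∈ G` with `γU₁ ∩ V₁ ≠ ∅` and `γU₂ ∩ V₂ ≠ ∅`. -/
def WeakMixing (G : Type*) (X : Type*) [Group G] [TopologicalSpace X] [MulAction G X] :
    Prop :=
  ∀ U₁ U₂ V₁ V₂ : Set X, IsOpen U₁ → U₁.Nonempty → IsOpen U₂ → U₂.Nonempty →
    IsOpen V₁ → V₁.Nonempty → IsOpen V₂ → V₂.Nonempty →
    ∃ γ : G, ((γ • U₁) ∩ V₁).Nonempty ∧ ((γ • U₂) ∩ V₂).Nonempty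


/-- In a Hausdorff topological group `Γ`, a compact proper subset `C` contains no thick
subset of `Γ`. -/
theorem compact_proper_not_contains_thick {Γ : Type*} [Group Γ] [TopologicalSpace Γ]
    [IsTopologicalGroup Γ] [T2Space Γ] (C : Set Γ) (hC : IsCompact C)
    (hCproper : C ≠ Set.univ) :
    ∀ N : Set Γ, N ⊆ C → ¬ IsThick N := by
  intro N hNC hthick
  have hclosed : ∀ γ : Γ, IsClosed (γ • C) := fun γ =>
    (hC.smul γ).isClosed
  have hfin : ∀ u : Finset Γ, (C ∩ ⋂ γ ∈ u, γ • C).Nonempty := by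
    intro u
    obtain ⟨x, hxN, hxI⟩ := hthick u
    refine ⟨x, hNC hxN, ?_⟩
    simp only [Set.mem_iInter] at hxI ⊢
    intro γ hγ
    exact Set.smul_set_mono hNC (hxI γ hγ)
  obtain ⟨x, hxC, hxI⟩ := hC.inter_iInter_nonempty (fun γ : Γ => γ • C) hclosed hfin
  apply hCproper
  ext g
  simp only [Set.mem_univ, iff_true]
  have := Set.mem_iInter.mp hxI (x * g⁻¹)
  obtain ⟨c, hc, hcx⟩ := this
  have : c = g := by
    have : x * g⁻¹ * c = x := hcx
    calc c = (x * g⁻¹)⁻¹ * (x * g⁻¹ * c) := by group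
    _ = (x * g⁻¹)⁻¹ * x := by rw [this]
    _ = g := by group
  rwa [this] at hc
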